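/- Fix the linear order E < D < N on steps. For a bad Delannoy path W from (0,0) to (n,n) with l steps, let w_k be the first step of maximal depth (where the depth after step i is #N's minus #E's among the first i steps), and let φ(W) be obtained by replacing w_k with E. Then φ is a bijection from bad paths in Del(n,n,l) onto Del(n+1,n-1,l), and maj(W) = maj(φ(W)) + 1 for all bad W. -/

import Mathlib

inductive Step : Type
  | E | D | N
deriving DecidableEq

instance instFintypeStep : Fintype Step :=
  ⟨{Step.E, Step.D, Step.N}, fun x => by cases x <;> simp⟩

open Step Polynomial

/-- All words of length `l` over the step alphabet. -/
def Words (l : ℕ) : Finset (List Step) :=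
  (Finset.univ : Finset (Fin l → Step)).image List.ofFn

/-- Delannoy paths from (0,0) to (m,n) with `l` steps, encoded as words:
`#E + #D = m`, `#N + #D = n`, length `l`. -/
def DelSet (m n l : ℕ) : Finset (List Step) :=
  (Words l).filter fun w => w.count E + w.count D = m ∧ w.count N + w.count D = n

/-- A word is bad if some prefix contains more N's than E's. -/
def bad (w : List Step) : Bool :=
  (List.range (w.length + 1)).any fun k => (w.take k).count E < (w.take k).count N

/-- Bad Delannoy paths from (0,0) to (n,n) with `l` steps. -/
def BDelSet (n l : ℕ) : Finset (List Step) :=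
  (DelSet n n l).filter fun w => bad w

/-- Schröder paths: Delannoy paths to (n,n) never going above the diagonal. -/
def SchSet (n l : ℕ) : Finset (List Step) :=
  (DelSet n n l).filter fun w => ¬ bad w

/-- Major index of a word w_1 ⋯ w_l with respect to a ranking of the letters:
the sum of all positions i (1 ≤ i ≤ l-1) with w_i > w_{i+1}. -/
def maj (rank : Step → ℕ) (w : List Step) : ℕ :=
  ∑ i ∈ Finset.range (w.length - 1),
    if rank (w.getD (i + 1) E) < rank (w.getD i E) then i + 1 else 0

/-- q-integer [m] = 1 + q + ⋯ + q^{m-1}. -/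
noncomputable def qint (m : ℕ) : Polynomial ℚ :=
  ∑ i ∈ Finset.range m, X ^ i

/-- q-factorial. -/
noncomputable def qfact : ℕ → Polynomial ℚ
  | 0 => 1
  | m + 1 => qfact m * qint (m + 1)

/-- Gaussian binomial coefficient, via the q-Pascal recurrence. -/
noncomputable def qbinom : ℕ → ℕ → Polynomial ℚ
  | _, 0 => 1
  | 0, _ + 1 => 0
  | m + 1, k + 1 => qbinom m k + X ^ (k + 1) * qbinom m (k + 1)

/-- q-trinomial coefficient [l]!/([a]![b]![c]!), defined when a+b+c = l. -/
noncomputable def qbinom3 (l a b c : ℕ) : Polynomial ℚ :=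
  if a + b + c = l then qbinom l a * qbinom (l - a) b else 0

/-- Depth after the first `i` steps: #N − #E. -/
def depth (w : List Step) (i : ℕ) : ℤ :=
  ((w.take i).count N : ℤ) - (w.take i).count E

/-- `k` (0 ≤ k ≤ l) achieves the maximal running depth. -/
def isMaxDepth (w : List Step) (k : ℕ) : Bool :=
  (List.range (w.length + 1)).all fun i => decide (depth w i ≤ depth w k)

/-- The first index (number of steps) at which the running depth is maximal. -/
def firstDeep (w : List Step) : ℕ :=
  (List.range (w.length + 1)).findIdx (isMaxDepth w)

/-- The last index at which the running depth is maximal. -/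
def lastDeep (w : List Step) : ℕ :=
  w.length - (List.range (w.length + 1)).reverse.findIdx (isMaxDepth w)

/-- Replace the first deepest step (the step w_k, k = firstDeep) with E. -/
def phi (w : List Step) : List Step := w.set (firstDeep w - 1) E

/-- Replace the step following the last deepest point with N. -/
def phiInv (w : List Step) : List Step := w.set (lastDeep w) N

/-- Number of consecutive D's immediately after the first deepest step. -/
def runS (w : List Step) : ℕ := ((w.drop (firstDeep w)).takeWhile (· == D)).length

/-- Number of consecutive D's immediately before the first deepest step. -/
def runR (w : List Step) : ℕ :=
  ((w.take (firstDeep w - 1)).reverse.takeWhile (· == D)).length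

/-- The window map: replace W₁ = D^r w_k D^s by D^{r-1} E D^{s+1} if r ≥ 1,
and by D^s E if r = 0. -/
def phiWin (w : List Step) : List Step :=
  let k := firstDeep w - 1
  let r := runR w
  let s := runS w
  let seg : List Step :=
    if 1 ≤ r then List.replicate (r - 1) D ++ [E] ++ List.replicate (s + 1) D
    else List.replicate s D ++ [E]
  w.take (k - r) ++ seg ++ w.drop (k + s + 1)

/-- 0-based index of the first step after which the path is above the diagonal. -/
def firstAbove (w : List Step) : ℕ :=
  (List.range w.length).findIdx fun i =>
    decide ((w.take (i + 1)).count E < (w.take (i + 1)).count N)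

/-- The map ψ of Bonin–Shapiro–Simion: replace with E the last N of the maximal
run of consecutive N's beginning at the first step going above the diagonal. -/
def psi (w : List Step) : List Step :=
  let i := firstAbove w
  let j := i + ((w.drop i).takeWhile (· == N)).length - 1
  w.set j E

namespace PhiAux
open Step List

/-- Signed step contribution to depth. -/
def dstep : Step → ℤ
  | E => -1
  | D => 0
  | N => 1

lemma depth_zero (w : List Step) : depth w 0 = 0 := by simp [depth]

lemma depth_succ (w : List Step) (i : ℕ) (h : i < w.length) :
    depth w (i + 1) = depth w i + dstep (w.getD i E) := by
  have ht : w.take (i + 1) = w.take i ++ [w[i]] := by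
    rw [List.take_succ, List.getElem?_eq_getElem h]; rfl
  rw [List.getD_eq_getElem w E h]
  unfold depth
  rw [ht, List.count_append, List.count_append]
  cases hx : w[i] <;> simp [dstep, hx, List.count_singleton] <;> push_cast <;> ring

lemma depth_stable (w : List Step) (i : ℕ) (h : w.length ≤ i) :
    depth w i = depth w w.length := by
  unfold depth
  rw [List.take_of_length_le h, List.take_of_length_le le_rfl]

lemma depth_length (w : List Step) :
    depth w w.length = (w.count N : ℤ) - w.count E := by
  unfold depth; rw [List.take_of_length_le le_rfl]

lemma step_eq_N (w : List Step) (i : ℕ) (h : i < w.length)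
    (hd : depth w i < depth w (i + 1)) : w.getD i E = N := by
  rw [depth_succ w i h] at hd
  cases hx : w.getD i E <;> rw [hx] at hd <;> simp [dstep] at hd

lemma step_eq_E (w : List Step) (i : ℕ) (h : i < w.length)
    (hd : depth w (i + 1) < depth w i) : w.getD i E = E := by
  rw [depth_succ w i h] at hd
  cases hx : w.getD i E <;> rw [hx] at hd <;> simp [dstep] at hd

lemma step_ne_N (w : List Step) (i : ℕ) (h : i < w.length)
    (hd : depth w (i + 1) ≤ depth w i) : w.getD i E ≠ N := by
  rw [depth_succ w i h] at hd
  cases hx : w.getD i E <;> simp_all [dstep]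

lemma step_ne_E (w : List Step) (i : ℕ) (h : i < w.length)
    (hd : depth w i ≤ depth w (i + 1)) : w.getD i E ≠ E := by
  rw [depth_succ w i h] at hd
  cases hx : w.getD i E <;> simp_all [dstep]

end PhiAux
namespace PhiAux
open Step List

lemma isMaxDepth_iff (w : List Step) (k : ℕ) :
    isMaxDepth w k = true ↔ ∀ i ≤ w.length, depth w i ≤ depth w k := by
  simp [isMaxDepth, List.all_eq_true, Nat.lt_succ_iff]

lemma exists_isMaxDepth (w : List Step) : ∃ k ≤ w.length, isMaxDepth w k = true := by
  obtain ⟨k, hk, hmax⟩ := Finset.exists_max_image (Finset.range (w.length + 1)) (depth w)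
    ⟨0, Finset.mem_range.2 (Nat.succ_pos _)⟩
  refine ⟨k, Nat.lt_succ_iff.1 (Finset.mem_range.1 hk), ?_⟩
  rw [isMaxDepth_iff]
  exact fun i hi => hmax i (Finset.mem_range.2 (Nat.lt_succ_of_le hi))

lemma firstDeep_spec (w : List Step) :
    firstDeep w ≤ w.length ∧ isMaxDepth w (firstDeep w) = true ∧
      ∀ j < firstDeep w, isMaxDepth w j = false := by
  obtain ⟨k, hk, hmax⟩ := exists_isMaxDepth w
  have hex : ∃ x ∈ List.range (w.length + 1), isMaxDepth w x = true :=
    ⟨k, List.mem_range.2 (Nat.lt_succ_of_le hk), hmax⟩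
  have hlt : (List.range (w.length + 1)).findIdx (isMaxDepth w) <
      (List.range (w.length + 1)).length := List.findIdx_lt_length_of_exists hex
  have hlen : (List.range (w.length + 1)).length = w.length + 1 := List.length_range
  have hval : isMaxDepth w (firstDeep w) = true := by
    have := List.findIdx_getElem (w := hlt) (p := isMaxDepth w)
    rwa [List.getElem_range] at this
  refine ⟨by unfold firstDeep; omega, hval, fun j hj => ?_⟩
  have hj' : j < (List.range (w.length + 1)).length := by unfold firstDeep at hj; omega
  have := List.not_of_lt_findIdx (xs := List.range (w.length + 1)) (p := isMaxDepth w)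
    (i := j) hj
  rwa [List.getElem_range] at this

lemma lastDeep_spec (w : List Step) :
    lastDeep w ≤ w.length ∧ isMaxDepth w (lastDeep w) = true ∧
      ∀ j, lastDeep w < j → j ≤ w.length → isMaxDepth w j = false := by
  set m := w.length with hm
  have hLget : ∀ i (h : i < ((List.range (m + 1)).reverse).length),
      ((List.range (m + 1)).reverse)[i] = m - i := by
    intro i h
    rw [List.getElem_reverse, List.getElem_range]
    simp [List.length_range]
  set L := (List.range (m + 1)).reverse with hL
  have hLlen : L.length = m + 1 := by simp [hL]
  obtain ⟨k, hk, hmax⟩ := exists_isMaxDepth w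
  have hex : ∃ x ∈ L, isMaxDepth w x = true := by
    refine ⟨k, ?_, hmax⟩
    rw [hL, List.mem_reverse]
    exact List.mem_range.2 (Nat.lt_succ_of_le hk)
  have hlt : L.findIdx (isMaxDepth w) < L.length := List.findIdx_lt_length_of_exists hex
  set j0 := L.findIdx (isMaxDepth w) with hj0
  have hj0m : j0 ≤ m := by omega
  have hval : isMaxDepth w (m - j0) = true := by
    have := List.findIdx_getElem (w := hlt) (p := isMaxDepth w)
    rwa [hLget j0 hlt] at this
  have hld : lastDeep w = m - j0 := rfl
  refine ⟨by omega, by rw [hld]; exact hval, fun j hj hjm => ?_⟩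
  rw [hld] at hj
  have hi : m - j < j0 := by omega
  have := List.not_of_lt_findIdx (xs := L) (p := isMaxDepth w) (i := m - j) hi
  rwa [hLget (m - j) (by omega), Nat.sub_sub_self hjm] at this

lemma bad_iff (w : List Step) : bad w = true ↔ ∃ k ≤ w.length, 0 < depth w k := by
  simp only [bad, List.any_eq_true, List.mem_range, Nat.lt_succ_iff, decide_eq_true_eq]
  constructor
  · rintro ⟨k, hk, h⟩
    exact ⟨k, hk, by unfold depth; omega⟩
  · rintro ⟨k, hk, h⟩
    unfold depth at h
    exact ⟨k, hk, by omega⟩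

lemma mem_Words (w : List Step) (l : ℕ) : w ∈ Words l ↔ w.length = l := by
  constructor
  · rintro hw
    simp only [Words, Finset.mem_image] at hw
    obtain ⟨f, _, rfl⟩ := hw
    exact List.length_ofFn
  · rintro rfl
    simp only [Words, Finset.mem_image]
    exact ⟨w.get, Finset.mem_univ _, List.ofFn_get w⟩

lemma mem_DelSet (w : List Step) (m n l : ℕ) :
    w ∈ DelSet m n l ↔ w.length = l ∧ w.count E + w.count D = m ∧ w.count N + w.count D = n := by
  simp only [DelSet, Finset.mem_filter, mem_Words, and_assoc]

lemma mem_BDelSet (w : List Step) (n l : ℕ) :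
    w ∈ BDelSet n l ↔ w ∈ DelSet n n l ∧ bad w = true := by
  simp [BDelSet, Finset.mem_filter]

end PhiAux
namespace PhiAux
open Step List

lemma firstDeep_eq (w : List Step) (k : ℕ) (hk : k ≤ w.length)
    (h1 : isMaxDepth w k = true) (h2 : ∀ j < k, isMaxDepth w j = false) :
    firstDeep w = k := by
  obtain ⟨hle, hv, hf⟩ := firstDeep_spec w
  rcases lt_trichotomy (firstDeep w) k with h | h | h
  · rw [h2 _ h] at hv; exact absurd hv (by simp)
  · exact h
  · rw [hf _ h] at h1; exact absurd h1 (by simp)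

lemma lastDeep_eq (w : List Step) (k : ℕ) (hk : k ≤ w.length)
    (h1 : isMaxDepth w k = true) (h2 : ∀ j, k < j → j ≤ w.length → isMaxDepth w j = false) :
    lastDeep w = k := by
  obtain ⟨hle, hv, hf⟩ := lastDeep_spec w
  rcases lt_trichotomy (lastDeep w) k with h | h | h
  · rw [hf _ h hk] at h1; exact absurd h1 (by simp)
  · exact h
  · rw [h2 _ h hle] at hv; exact absurd hv (by simp)

lemma depth_set_le (w : List Step) (p i : ℕ) (a : Step) (hi : i ≤ p) :
    depth (w.set p a) i = depth w i := by
  unfold depth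
  rw [List.take_set, List.set_eq_of_length_le]
  rw [List.length_take]
  omega

lemma getD_set_ne (w : List Step) (p i : ℕ) (a d : Step) (h : i ≠ p) :
    (w.set p a).getD i d = w.getD i d := by
  rcases lt_or_ge i w.length with hi | hi
  · rw [List.getD_eq_getElem _ _ (by simpa using hi), List.getD_eq_getElem _ _ hi]
    exact List.getElem_set_ne (Ne.symm h) _
  · rw [List.getD_eq_default _ _ (by simpa using hi), List.getD_eq_default _ _ hi]

lemma getD_set_self (w : List Step) (p : ℕ) (a d : Step) (hp : p < w.length) :
    (w.set p a).getD p d = a := by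
  rw [List.getD_eq_getElem _ _ (by simpa using hp)]
  exact List.getElem_set_self _

lemma set_getD_self (w : List Step) (p : ℕ) (a : Step) (hp : p < w.length)
    (ha : w.getD p E = a) : w.set p a = w := by
  apply List.ext_getElem (by simp)
  intro i h1 h2
  rw [List.getElem_set]
  split
  · next h => subst h; rw [← ha, List.getD_eq_getElem _ _ h2]
  · rfl

lemma count_take_pos (w : List Step) (p i : ℕ) (hp : p < w.length) (hpi : p < i)
    (hN : w.getD p E = N) : 0 < (w.take i).count N := by
  rw [List.count_pos_iff]
  have hp' : p < (w.take i).length := by simp [List.length_take]; omega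
  have : (w.take i)[p] = N := by
    rw [List.getElem_take]
    rw [List.getD_eq_getElem _ _ hp] at hN
    exact hN
  exact this ▸ List.getElem_mem hp'

lemma depth_set_gt (w : List Step) (p i : ℕ) (a : Step) (hp : p < w.length) (hpi : p < i) :
    depth (w.set p a) i = depth w i - dstep (w.getD p E) + dstep a := by
  unfold depth
  rw [List.take_set]
  have hp' : p < (w.take i).length := by simp [List.length_take]; omega
  have hgp : (w.take i)[p] = w[p] := List.getElem_take
  rw [List.count_set (a := a) (b := N) hp', List.count_set (a := a) (b := E) hp', hgp]
  rw [List.getD_eq_getElem _ _ hp]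
  have hcn : w[p] = N → 1 ≤ (w.take i).count N := fun h =>
    List.count_pos_iff.2 ((hgp.trans h) ▸ List.getElem_mem hp')
  have hce : w[p] = E → 1 ≤ (w.take i).count E := fun h =>
    List.count_pos_iff.2 ((hgp.trans h) ▸ List.getElem_mem hp')
  cases hx : w[p] <;> cases a <;>
    (try have h1 := hcn hx) <;> (try have h2 := hce hx) <;> simp [dstep, hx] <;> omega

lemma count_set_of (w : List Step) (p : ℕ) (a c : Step) (hp : p < w.length) :
    ((w.set p a).count c : ℤ) =
      (w.count c : ℤ) - (if w.getD p E = c then 1 else 0) + (if a = c then 1 else 0) := by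
  rw [List.count_set (a := a) (b := c) hp, List.getD_eq_getElem _ _ hp]
  have hc : ∀ c : Step, w[p] = c → 1 ≤ w.count c := fun c h =>
    List.count_pos_iff.2 (h ▸ List.getElem_mem hp)
  cases hx : w[p] <;> cases c <;> cases a <;>
    (try have h1 := hc _ hx) <;> simp [hx] <;> omega

end PhiAux
namespace PhiAux
open Step List

lemma not_isMaxDepth (w : List Step) (j : ℕ) (i : ℕ) (hi : i ≤ w.length)
    (h : depth w j < depth w i) : isMaxDepth w j = false := by
  rw [← Bool.not_eq_true, isMaxDepth_iff]
  push_neg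
  exact ⟨i, hi, h⟩

lemma strict_of_not_max (w : List Step) (k j : ℕ)
    (hmax' : ∀ i ≤ w.length, depth w i ≤ depth w k)
    (hf : isMaxDepth w j = false) : depth w j < depth w k := by
  have h : ¬ ∀ i ≤ w.length, depth w i ≤ depth w j := by
    rw [← isMaxDepth_iff, hf]; simp
  push_neg at h
  obtain ⟨i, hi, hgt⟩ := h
  exact lt_of_lt_of_le hgt (hmax' i hi)

/-- Master structural lemma for a bad balanced word. -/
lemma bad_facts (w : List Step) (hbad : bad w = true) (hbal : depth w w.length = 0) :
    1 ≤ firstDeep w ∧ firstDeep w < w.length ∧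
    w.getD (firstDeep w - 1) E = N ∧
    w.getD (firstDeep w) E ≠ N ∧
    (2 ≤ firstDeep w → w.getD (firstDeep w - 2) E ≠ E) ∧
    lastDeep (w.set (firstDeep w - 1) E) = firstDeep w - 1 := by
  obtain ⟨hle, hmax, hfirst⟩ := firstDeep_spec w
  set k := firstDeep w with hk
  have hmax' : ∀ i ≤ w.length, depth w i ≤ depth w k := (isMaxDepth_iff _ _).1 hmax
  have hstrict : ∀ j < k, depth w j < depth w k := fun j hj =>
    strict_of_not_max w k j hmax' (hfirst j hj)
  have hpos : 0 < depth w k := by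
    obtain ⟨m, hm, hm0⟩ := (bad_iff w).1 hbad
    exact lt_of_lt_of_le hm0 (hmax' m hm)
  have hk1 : 1 ≤ k := by
    by_contra h
    have h0 : k = 0 := by omega
    rw [h0, depth_zero] at hpos
    omega
  have hkl : k < w.length := by
    rcases eq_or_lt_of_le hle with h | h
    · rw [h, hbal] at hpos; omega
    · exact h
  have hek : k - 1 + 1 = k := by omega
  have hNs : w.getD (k - 1) E = N := by
    apply step_eq_N w (k - 1) (by omega)
    rw [hek]
    exact hstrict (k - 1) (by omega)
  have hdp : depth w (k - 1) = depth w k - 1 := by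
    have h1 := depth_succ w (k - 1) (by omega)
    rw [hNs, hek] at h1
    simp [dstep] at h1
    omega
  have hnN : w.getD k E ≠ N := step_ne_N w k hkl (hmax' (k + 1) (by omega))
  have hnE : 2 ≤ k → w.getD (k - 2) E ≠ E := by
    intro h2
    apply step_ne_E w (k - 2) (by omega)
    have e : k - 2 + 1 = k - 1 := by omega
    rw [e, hdp]
    have := hstrict (k - 2) (by omega)
    omega
  refine ⟨hk1, hkl, hNs, hnN, hnE, ?_⟩
  -- lastDeep of the modified word
  set v := w.set (k - 1) E with hv
  have hvl : v.length = w.length := List.length_set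
  have hdle : ∀ i ≤ k - 1, depth v i = depth w i := fun i hi => depth_set_le w (k - 1) i E hi
  have hdgt : ∀ i, k - 1 < i → depth v i = depth w i - 2 := by
    intro i hi
    rw [hv, depth_set_gt w (k - 1) i E (by omega) hi, hNs]
    simp [dstep]
    ring
  have hvp : depth v (k - 1) = depth w k - 1 := by rw [hdle _ le_rfl, hdp]
  apply lastDeep_eq
  · omega
  · rw [isMaxDepth_iff]
    intro i hi
    rw [hvl] at hi
    rcases le_or_gt i (k - 1) with h | h
    · rw [hdle i h, hvp]
      rcases eq_or_lt_of_le h with h' | h'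
      · rw [h', hdp]
      · have := hstrict i (by omega)
        omega
    · rw [hdgt i h, hvp]
      have := hmax' i hi
      omega
  · intro j hj hjl
    rw [hvl] at hjl
    apply not_isMaxDepth v j (k - 1) (by omega)
    rw [hdgt j hj, hvp]
    have := hmax' j hjl
    omega

/-- Master structural lemma for the inverse direction. -/
lemma inv_facts (v : List Step) (hneg : depth v v.length = -2) :
    lastDeep v < v.length ∧ v.getD (lastDeep v) E = E ∧
    bad (v.set (lastDeep v) N) = true ∧
    firstDeep (v.set (lastDeep v) N) = lastDeep v + 1 := by
  obtain ⟨hle, hmax, hlast⟩ := lastDeep_spec v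
  set j := lastDeep v with hj
  have hmax' : ∀ i ≤ v.length, depth v i ≤ depth v j := (isMaxDepth_iff _ _).1 hmax
  have hstrict : ∀ i, j < i → i ≤ v.length → depth v i < depth v j := fun i h1 h2 =>
    strict_of_not_max v j i hmax' (hlast i h1 h2)
  have h0 : 0 ≤ depth v j := by
    have := hmax' 0 (Nat.zero_le _)
    rw [depth_zero] at this
    omega
  have hjl : j < v.length := by
    rcases eq_or_lt_of_le hle with h | h
    · rw [h, hneg] at h0; omega
    · exact h
  have hEs : v.getD j E = E :=
    step_eq_E v j hjl (hstrict (j + 1) (by omega) (by omega))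
  have hdj : depth v (j + 1) = depth v j - 1 := by
    have h1 := depth_succ v j hjl
    rw [hEs] at h1
    simp [dstep] at h1
    omega
  set u := v.set j N with hu
  have hul : u.length = v.length := List.length_set
  have hdle : ∀ i ≤ j, depth u i = depth v i := fun i hi => depth_set_le v j i N hi
  have hdgt : ∀ i, j < i → depth u i = depth v i + 2 := by
    intro i hi
    rw [hu, depth_set_gt v j i N hjl hi, hEs]
    simp [dstep]
    ring
  have hup : depth u (j + 1) = depth v j + 1 := by rw [hdgt _ (by omega), hdj]; ring
  have hbadu : bad u = true := by
    rw [bad_iff]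
    exact ⟨j + 1, by omega, by rw [hup]; omega⟩
  refine ⟨hjl, hEs, hbadu, ?_⟩
  apply firstDeep_eq
  · omega
  · rw [isMaxDepth_iff]
    intro i hi
    rw [hul] at hi
    rcases le_or_gt i j with h | h
    · rw [hdle i h, hup]
      have := hmax' i (by omega)
      omega
    · rw [hdgt i h, hup]
      have := hstrict i h hi
      omega
  · intro j' hj'
    apply not_isMaxDepth u j' (j + 1) (by omega)
    rw [hdle j' (by omega), hup]
    have := hmax' j' (by omega)
    omega

end PhiAux
namespace PhiAux
open Step List

lemma maj_phi_aux (rank : Step → ℕ) (hED : rank E < rank D) (hDN : rank D < rank N)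
    (w : List Step) (p : ℕ) (hp : p + 1 < w.length)
    (hN : w.getD p E = N) (hnextN : w.getD (p + 1) E ≠ N)
    (hprevE : 1 ≤ p → w.getD (p - 1) E ≠ E) :
    maj rank w = maj rank (w.set p E) + 1 := by
  have hEmin : ∀ x : Step, ¬ rank x < rank E := by intro x; cases x <;> omega
  have hNnlt : ∀ x : Step, ¬ rank N < rank x := by intro x; cases x <;> omega
  have hNmax : ∀ x : Step, x ≠ N → rank x < rank N := by
    intro x hx; cases x <;> first | omega | exact absurd rfl hx
  have hEless : ∀ x : Step, x ≠ E → rank E < rank x := by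
    intro x hx; cases x <;> first | omega | exact absurd rfl hx
  set v := w.set p E with hv
  set Fw : ℕ → ℕ := fun i => if rank (w.getD (i + 1) E) < rank (w.getD i E) then i + 1 else 0
    with hFw
  set Fv : ℕ → ℕ := fun i => if rank (v.getD (i + 1) E) < rank (v.getD i E) then i + 1 else 0
    with hFv
  have hmw : maj rank w = ∑ i ∈ Finset.range (w.length - 1), Fw i := by
    simp only [maj, hFw]
  have hmv : maj rank v = ∑ i ∈ Finset.range (w.length - 1), Fv i := by
    simp only [maj, hv, List.length_set, hFv]
  have hgv_ne : ∀ i, i ≠ p → v.getD i E = w.getD i E := fun i hi =>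
    getD_set_ne w p i E E hi
  have hgv_p : v.getD p E = E := getD_set_self w p E E (by omega)
  rw [hmw, hmv]
  rcases Nat.eq_zero_or_pos p with hp0 | hp1
  · subst hp0
    have h0mem : (0 : ℕ) ∈ Finset.range (w.length - 1) := by
      simp only [Finset.mem_range]; omega
    rw [Finset.sum_eq_add_sum_sdiff_singleton_of_mem h0mem Fw,
      Finset.sum_eq_add_sum_sdiff_singleton_of_mem h0mem Fv]
    have e1 : Fw 0 = 1 := by
      simp only [hFw, hN]
      rw [if_pos (hNmax _ hnextN)]
    have e2 : Fv 0 = 0 := by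
      simp only [hFv, hgv_p]
      rw [if_neg (hEmin _)]
    have hS : ∑ i ∈ Finset.range (w.length - 1) \ {0}, Fw i =
        ∑ i ∈ Finset.range (w.length - 1) \ {0}, Fv i := by
      apply Finset.sum_congr rfl
      intro i hi
      simp only [Finset.mem_sdiff, Finset.mem_singleton] at hi
      simp only [hFw, hFv, hgv_ne i hi.2, hgv_ne (i + 1) (by omega)]
    rw [e1, e2, hS]
    ring
  · have hm1 : p - 1 ∈ Finset.range (w.length - 1) := by
      simp only [Finset.mem_range]; omega
    have hm2 : p ∈ Finset.range (w.length - 1) \ {p - 1} := by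
      simp only [Finset.mem_sdiff, Finset.mem_range, Finset.mem_singleton]
      omega
    rw [Finset.sum_eq_add_sum_sdiff_singleton_of_mem hm1 Fw,
      Finset.sum_eq_add_sum_sdiff_singleton_of_mem hm2 Fw,
      Finset.sum_eq_add_sum_sdiff_singleton_of_mem hm1 Fv,
      Finset.sum_eq_add_sum_sdiff_singleton_of_mem hm2 Fv]
    have ep : p - 1 + 1 = p := by omega
    have e1 : Fw (p - 1) = 0 := by
      simp only [hFw, ep, hN]
      rw [if_neg (hNnlt _)]
    have e2 : Fw p = p + 1 := by
      simp only [hFw, hN]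
      rw [if_pos (hNmax _ hnextN)]
    have e3 : Fv (p - 1) = p := by
      simp only [hFv, ep, hgv_p, hgv_ne (p - 1) (by omega)]
      rw [if_pos (hEless _ (hprevE hp1))]
    have e4 : Fv p = 0 := by
      simp only [hFv, hgv_p, hgv_ne (p + 1) (by omega)]
      rw [if_neg (hEmin _)]
    have hS : ∑ i ∈ (Finset.range (w.length - 1) \ {p - 1}) \ {p}, Fw i =
        ∑ i ∈ (Finset.range (w.length - 1) \ {p - 1}) \ {p}, Fv i := by
      apply Finset.sum_congr rfl
      intro i hi
      simp only [Finset.mem_sdiff, Finset.mem_singleton] at hi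
      simp only [hFw, hFv, hgv_ne i hi.2, hgv_ne (i + 1) (by omega)]
    rw [e1, e2, e3, e4, hS]
    ring
end PhiAux
namespace PhiAux
open Step List

lemma balance_of_mem (w : List Step) (n l : ℕ) (hw : w ∈ DelSet n n l) :
    depth w w.length = 0 := by
  rw [mem_DelSet] at hw
  rw [depth_length]
  omega

lemma forward (n l : ℕ) (w : List Step) (hw : w ∈ BDelSet n l) :
    phi w ∈ DelSet (n + 1) (n - 1) l ∧ phiInv (phi w) = w := by
  rw [mem_BDelSet] at hw
  obtain ⟨hdel, hbad⟩ := hw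
  have hbal := balance_of_mem w n l hdel
  obtain ⟨hk1, hkl, hNs, hnN, hnE, hld⟩ := bad_facts w hbad hbal
  rw [mem_DelSet] at hdel
  obtain ⟨hlen, hcE, hcN⟩ := hdel
  set k := firstDeep w with hk
  set v := w.set (k - 1) E with hv
  have hp : k - 1 < w.length := by omega
  have hphi : phi w = v := rfl
  constructor
  · rw [mem_DelSet]
    rw [hphi]
    refine ⟨by rw [hv, List.length_set]; exact hlen, ?_, ?_⟩
    · have hE := count_set_of w (k - 1) E E hp
      have hD := count_set_of w (k - 1) E D hp
      rw [hNs] at hE hD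
      simp only [reduceCtorEq, if_false, if_true] at hE hD
      rw [← hv] at hE hD
      omega
    · have hN' := count_set_of w (k - 1) E N hp
      have hD := count_set_of w (k - 1) E D hp
      rw [hNs] at hN' hD
      simp only [reduceCtorEq, if_false, if_true] at hN' hD
      rw [← hv] at hN' hD
      omega
  · rw [hphi]
    unfold phiInv
    rw [hld, hv, List.set_set]
    exact set_getD_self w (k - 1) N hp hNs

lemma forward_maj (n l : ℕ) (rank : Step → ℕ)
    (hED : rank E < rank D) (hDN : rank D < rank N)
    (w : List Step) (hw : w ∈ BDelSet n l) :
    maj rank w = maj rank (phi w) + 1 := by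
  rw [mem_BDelSet] at hw
  obtain ⟨hdel, hbad⟩ := hw
  have hbal := balance_of_mem w n l hdel
  obtain ⟨hk1, hkl, hNs, hnN, hnE, -⟩ := bad_facts w hbad hbal
  set k := firstDeep w with hk
  have ek : k - 1 + 1 = k := by omega
  have e2 : k - 1 - 1 = k - 2 := by omega
  exact maj_phi_aux rank hED hDN w (k - 1) (by omega) hNs
    (by rw [ek]; exact hnN) (fun h => by rw [e2]; exact hnE (by omega))

lemma backward (n l : ℕ) (hn : 1 ≤ n) (v : List Step) (hv : v ∈ DelSet (n + 1) (n - 1) l) :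
    phiInv v ∈ BDelSet n l ∧ phi (phiInv v) = v := by
  rw [mem_DelSet] at hv
  obtain ⟨hlen, hcE, hcN⟩ := hv
  have hneg : depth v v.length = -2 := by
    rw [depth_length]
    omega
  obtain ⟨hjl, hEs, hbadu, hfd⟩ := inv_facts v hneg
  set j := lastDeep v with hj
  set u := v.set j N with hu
  have hpinv : phiInv v = u := rfl
  rw [hpinv]
  constructor
  · rw [mem_BDelSet, mem_DelSet]
    refine ⟨⟨by rw [hu, List.length_set]; exact hlen, ?_, ?_⟩, hbadu⟩
    · have hE := count_set_of v j N E hjl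
      have hD := count_set_of v j N D hjl
      rw [hEs] at hE hD
      simp only [reduceCtorEq, if_false, if_true] at hE hD
      rw [← hu] at hE hD
      omega
    · have hN' := count_set_of v j N N hjl
      have hD := count_set_of v j N D hjl
      rw [hEs] at hN' hD
      simp only [reduceCtorEq, if_false, if_true] at hN' hD
      rw [← hu] at hN' hD
      omega
  · unfold phi
    rw [hfd]
    simp only [Nat.add_sub_cancel]
    rw [hu, List.set_set]
    exact set_getD_self v j E hjl hEs

end PhiAux

/-- for the order E < D < N, replacing the first deepest step of a
bad path with E is a bijection from bad paths in Del(n,n,l) onto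
Del(n+1,n-1,l), and maj(W) = maj(φ(W)) + 1. -/
theorem phi_bijOn_EDN (n l : ℕ) (hn : 1 ≤ n)
    (rank : Step → ℕ) (hrank : Function.Injective rank)
    (hED : rank E < rank D) (hDN : rank D < rank N) :
    Set.BijOn phi (BDelSet n l : Set (List Step)) (DelSet (n + 1) (n - 1) l : Set (List Step)) ∧
      ∀ w ∈ BDelSet n l, maj rank w = maj rank (phi w) + 1 := by
  constructor
  · refine ⟨?_, ?_, ?_⟩
    · intro w hw
      exact Finset.mem_coe.2 (PhiAux.forward n l w (Finset.mem_coe.1 hw)).1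
    · intro w1 h1 w2 h2 heq
      have e1 := (PhiAux.forward n l w1 (Finset.mem_coe.1 h1)).2
      have e2 := (PhiAux.forward n l w2 (Finset.mem_coe.1 h2)).2
      rw [← e1, ← e2, heq]
    · intro v hv
      obtain ⟨hm, he⟩ := PhiAux.backward n l hn v (Finset.mem_coe.1 hv)
      exact ⟨phiInv v, Finset.mem_coe.2 hm, he⟩
  · intro w hw
    exact PhiAux.forward_maj n l rank hED hDN w hw
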